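/- Let t>0 and let φ be a continuously differentiable function on the closed half plane such that φ is bounded and φ and ∂₂φ are integrable on ℝ²₊. Then for every x ∈ ℝ²₊, ∫_{ℝ²₊} (Γ(x−y,t) − Γ(x−y*,t)) ∂_{y₂}φ(y) dy = ∂_{x₂} [ ∫_{ℝ²₊} (Γ(x−y,t) + Γ(x−y*,t)) φ(y) dy ]; in other words, e^{tΔ_D}∂₂φ = ∂₂ e^{tΔ_N}φ, where e^{tΔ_N} and e^{tΔ_D} are the Neumann and Dirichlet heat semigroups on the half plane given by the kernels Γ(x−y,t)±Γ(x−y*,t). -/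

import Mathlib

open MeasureTheory Real Filter
open scoped ENNReal

noncomputable section

/-- The open upper half plane ℝ²₊ = {x : x₂ > 0}. -/
def upperHalf : Set (ℝ × ℝ) := {x | 0 < x.2}

/-- 2D heat kernel Γ(x,t) = (4πt)⁻¹ exp(−|x|²/(4t)). -/
def heatK (x : ℝ × ℝ) (t : ℝ) : ℝ :=
  (4 * π * t)⁻¹ * Real.exp (-(x.1 ^ 2 + x.2 ^ 2) / (4 * t))

/-- 1D heat kernel Γ₀(r,t) = (4πt)^{-1/2} exp(−r²/(4t)). -/
def heatK1 (r t : ℝ) : ℝ :=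
  (Real.sqrt (4 * π * t))⁻¹ * Real.exp (-r ^ 2 / (4 * t))

/-- ∂²_{z₁} E(z) = (z₁² − z₂²)/(2π|z|⁴), for E(z) = −(2π)⁻¹ log|z|. -/
def d2E (z : ℝ × ℝ) : ℝ :=
  (z.1 ^ 2 - z.2 ^ 2) / (2 * π * (z.1 ^ 2 + z.2 ^ 2) ^ 2)

/-- Poisson kernel P_s(r) = s/(π(r²+s²)). -/
def Pker (s r : ℝ) : ℝ := s / (π * (r ^ 2 + s ^ 2))

/-- Conjugate Poisson kernel Q_s(r) = r/(π(r²+s²)). -/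
def Qker (s r : ℝ) : ℝ := r / (π * (r ^ 2 + s ^ 2))

/-- ∇⊥E(z) = (∂₂E(z), −∂₁E(z)) for E(z) = −(2π)⁻¹ log|z|. -/
def gradPerpE (z : ℝ × ℝ) : ℝ × ℝ :=
  (-z.2 / (2 * π * (z.1 ^ 2 + z.2 ^ 2)), z.1 / (2 * π * (z.1 ^ 2 + z.2 ^ 2)))

/-- The Biot–Savart kernel ∇⊥_x D(x,y) = ∇⊥E(x−y) − ∇⊥E(x−y*). -/
def bsKernel (x y : ℝ × ℝ) : ℝ × ℝ :=
  gradPerpE (x.1 - y.1, x.2 - y.2) - gradPerpE (x.1 - y.1, x.2 + y.2)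

/-- Integral of a real function against a finite signed measure (via Jordan decomposition). -/
def sInt (μ : SignedMeasure (ℝ × ℝ)) (f : ℝ × ℝ → ℝ) : ℝ :=
  (∫ y, f y ∂μ.toJordanDecomposition.posPart) - ∫ y, f y ∂μ.toJordanDecomposition.negPart

/-- Integral of a vector-valued function against a finite signed measure. -/
def sIntV (μ : SignedMeasure (ℝ × ℝ)) (f : ℝ × ℝ → ℝ × ℝ) : ℝ × ℝ :=
  (∫ y, f y ∂μ.toJordanDecomposition.posPart) - ∫ y, f y ∂μ.toJordanDecomposition.negPart

/-- Total variation norm ‖μ‖_M of a finite signed measure. -/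
def normM (μ : SignedMeasure (ℝ × ℝ)) : ℝ := (μ.totalVariation Set.univ).toReal

/-- The vorticity kernel W(x,y,t). -/
def Wk (x y : ℝ × ℝ) (t : ℝ) : ℝ :=
  heatK (x.1 - y.1, x.2 - y.2) t + heatK (x.1 - y.1, x.2 + y.2) t
    + 4 * ∫ z₂ in (0:ℝ)..y.2, ∫ z₁ : ℝ, heatK (x.1 - z₁, x.2 + z₂) t * d2E (z₁ - y.1, z₂ - y.2)
    - 2 * heatK1 x.2 t * ∫ z₁ : ℝ, heatK1 (x.1 - z₁) t * Pker y.2 (z₁ - y.1)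

/-- T(t)ω₀(x) = ∫ W(x,y,t) dω₀(y) for a finite signed measure ω₀. -/
def Tsg (ω₀ : SignedMeasure (ℝ × ℝ)) (t : ℝ) (x : ℝ × ℝ) : ℝ :=
  sInt ω₀ (fun y => Wk x y t)

/-- The boundary trace operator T₁μ(x₁) = π⁻¹ ∫ y₂/((x₁−y₁)²+y₂²) dμ(y). -/
def T1op (μ : SignedMeasure (ℝ × ℝ)) (x₁ : ℝ) : ℝ :=
  π⁻¹ * sInt μ (fun y => y.2 / ((x₁ - y.1) ^ 2 + y.2 ^ 2))

def Kf (t a u : ℝ) : ℝ := (4 * π * t)⁻¹ * Real.exp (-(a ^ 2 + u ^ 2) / (4 * t))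

def Kf' (t a u : ℝ) : ℝ := (-(2 * u) / (4 * t)) * Kf t a u

lemma Kf_nonneg (t a u : ℝ) (ht : 0 < t) : 0 ≤ Kf t a u := by
  have : (0:ℝ) < 4 * π * t := by positivity
  exact mul_nonneg (by positivity) (Real.exp_nonneg _)

lemma Kf_le (t a u : ℝ) (ht : 0 < t) : Kf t a u ≤ (4 * π * t)⁻¹ := by
  have h1 : Real.exp (-(a ^ 2 + u ^ 2) / (4 * t)) ≤ 1 := by
    rw [Real.exp_le_one_iff]
    apply div_nonpos_of_nonpos_of_nonneg (neg_nonpos.mpr (by positivity)) (by positivity)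
  calc Kf t a u ≤ (4 * π * t)⁻¹ * 1 := by
        apply mul_le_mul_of_nonneg_left h1 (by positivity)
    _ = (4 * π * t)⁻¹ := mul_one _

lemma Kf_hasDeriv (t : ℝ) (ht : 0 < t) (a u : ℝ) :
    HasDerivAt (fun v => Kf t a v) (Kf' t a u) u := by
  have h1 : HasDerivAt (fun v : ℝ => -(a ^ 2 + v ^ 2) / (4 * t)) (-(2 * u) / (4 * t)) u := by
    have := (((hasDerivAt_pow 2 u).const_add (a ^ 2)).neg).div_const (4 * t)
    simpa using this
  have h2 := (h1.exp).const_mul ((4 * π * t)⁻¹)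
  have h3 : Kf' t a u = (4 * π * t)⁻¹ * (Real.exp (-(a ^ 2 + u ^ 2) / (4 * t)) * (-(2 * u) / (4 * t))) := by
    unfold Kf' Kf
    ring
  rw [h3]; exact h2

lemma Kf_shift_sub (t : ℝ) (ht : 0 < t) (a r s : ℝ) :
    HasDerivAt (fun v => Kf t a (v - r)) (Kf' t a (s - r)) s := by
  have := (Kf_hasDeriv t ht a (s - r)).comp s ((hasDerivAt_id s).sub_const r)
  simp at this; exact this

lemma Kf_shift_add (t : ℝ) (ht : 0 < t) (a r s : ℝ) :
    HasDerivAt (fun v => Kf t a (v + r)) (Kf' t a (s + r)) s := by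
  have := (Kf_hasDeriv t ht a (s + r)).comp s ((hasDerivAt_id s).add_const r)
  simp at this; exact this

lemma Kf_shift_const_sub (t : ℝ) (ht : 0 < t) (a c r : ℝ) :
    HasDerivAt (fun v => Kf t a (c - v)) (-Kf' t a (c - r)) r := by
  have := (Kf_hasDeriv t ht a (c - r)).comp r ((hasDerivAt_id r).const_sub c)
  simp at this; exact this

lemma Kf_shift_const_add (t : ℝ) (ht : 0 < t) (a c r : ℝ) :
    HasDerivAt (fun v => Kf t a (c + v)) (Kf' t a (c + r)) r := by
  have := (Kf_hasDeriv t ht a (c + r)).comp r ((hasDerivAt_id r).const_add c)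
  simp at this; exact this

lemma Kf_continuous (t : ℝ) (ht : 0 < t) : Continuous (fun p : ℝ × ℝ => Kf t p.1 p.2) := by
  unfold Kf; fun_prop

lemma Kf'_continuous (t : ℝ) (ht : 0 < t) : Continuous (fun p : ℝ × ℝ => Kf' t p.1 p.2) := by
  unfold Kf' Kf; fun_prop

/-- |u| e^{-u²/d} ≤ √d e^{-u²/(2d)} -/
lemma abs_mul_gauss_le (d u : ℝ) (hd : 0 < d) :
    |u| * Real.exp (-(u ^ 2) / d) ≤ Real.sqrt d * Real.exp (-(u ^ 2) / (2 * d)) := by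
  have hexp : Real.sqrt (Real.exp (u ^ 2 / d)) = Real.exp (u ^ 2 / (2 * d)) := by
    rw [show u ^ 2 / d = u ^ 2 / (2 * d) + u ^ 2 / (2 * d) by ring, Real.exp_add,
      Real.sqrt_mul_self (Real.exp_nonneg _)]
  have h1 : u ^ 2 ≤ d * Real.exp (u ^ 2 / d) := by
    have h2 : u ^ 2 / d ≤ Real.exp (u ^ 2 / d) :=
      le_trans (by linarith) (Real.add_one_le_exp _)
    calc u ^ 2 = d * (u ^ 2 / d) := by field_simp
      _ ≤ d * Real.exp (u ^ 2 / d) := by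
          exact mul_le_mul_of_nonneg_left h2 hd.le
  have h3 : |u| ≤ Real.sqrt d * Real.exp (u ^ 2 / (2 * d)) := by
    rw [← Real.sqrt_sq_eq_abs, ← hexp, ← Real.sqrt_mul hd.le]
    exact Real.sqrt_le_sqrt h1
  calc |u| * Real.exp (-(u ^ 2) / d)
      ≤ (Real.sqrt d * Real.exp (u ^ 2 / (2 * d))) * Real.exp (-(u ^ 2) / d) :=
        mul_le_mul_of_nonneg_right h3 (Real.exp_nonneg _)
    _ = Real.sqrt d * Real.exp (-(u ^ 2) / (2 * d)) := by
        rw [mul_assoc, ← Real.exp_add]; ring_nf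

/-- master pointwise bound for Kf' -/
lemma Kf'_abs_le (t : ℝ) (ht : 0 < t) (a u : ℝ) :
    |Kf' t a u| ≤ (Real.sqrt (4 * t) / (2 * t) * (4 * π * t)⁻¹) *
      (Real.exp (-(a ^ 2) / (4 * t)) * Real.exp (-(u ^ 2) / (8 * t))) := by
  have hc : (0:ℝ) < (4 * π * t)⁻¹ := by positivity
  have h0 : |Kf' t a u| = |u| / (2 * t) * Kf t a u := by
    unfold Kf'
    rw [abs_mul, abs_of_nonneg (Kf_nonneg t a u ht), abs_div, abs_neg, abs_mul, abs_two,
      abs_of_nonneg (show (0:ℝ) ≤ 4 * t by positivity)]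
    ring
  have h1 : Kf t a u = (4 * π * t)⁻¹ *
      (Real.exp (-(a ^ 2) / (4 * t)) * Real.exp (-(u ^ 2) / (4 * t))) := by
    unfold Kf
    rw [← Real.exp_add]
    ring_nf
  have h2 : |u| * Real.exp (-(u ^ 2) / (4 * t)) ≤
      Real.sqrt (4 * t) * Real.exp (-(u ^ 2) / (8 * t)) := by
    have := abs_mul_gauss_le (4 * t) u (by positivity)
    rw [show 2 * (4 * t) = 8 * t by ring] at this
    exact this
  rw [h0, h1]
  have key : |u| / (2 * t) * ((4 * π * t)⁻¹ *
      (Real.exp (-(a ^ 2) / (4 * t)) * Real.exp (-(u ^ 2) / (4 * t))))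
      = ((4 * π * t)⁻¹ / (2 * t) * Real.exp (-(a ^ 2) / (4 * t))) *
        (|u| * Real.exp (-(u ^ 2) / (4 * t))) := by ring
  rw [key]
  calc ((4 * π * t)⁻¹ / (2 * t) * Real.exp (-(a ^ 2) / (4 * t))) *
        (|u| * Real.exp (-(u ^ 2) / (4 * t)))
      ≤ ((4 * π * t)⁻¹ / (2 * t) * Real.exp (-(a ^ 2) / (4 * t))) *
        (Real.sqrt (4 * t) * Real.exp (-(u ^ 2) / (8 * t))) :=
        mul_le_mul_of_nonneg_left h2 (by positivity)
    _ = (Real.sqrt (4 * t) / (2 * t) * (4 * π * t)⁻¹) *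
      (Real.exp (-(a ^ 2) / (4 * t)) * Real.exp (-(u ^ 2) / (8 * t))) := by ring

/-- shift lemma: if |u - w| ≤ 1 then e^{-u²/d} ≤ e^{1/d} e^{-w²/(2d)} -/
lemma gauss_shift (d u w : ℝ) (hd : 0 < d) (h : |u - w| ≤ 1) :
    Real.exp (-(u ^ 2) / d) ≤ Real.exp (1 / d) * Real.exp (-(w ^ 2) / (2 * d)) := by
  rw [← Real.exp_add]
  apply Real.exp_le_exp.mpr
  have h1 : w ^ 2 ≤ 2 * u ^ 2 + 2 * (u - w) ^ 2 := by nlinarith [sq_nonneg (u + (u - w))]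
  have h2 : (u - w) ^ 2 ≤ 1 := by
    have := abs_nonneg (u - w)
    nlinarith [sq_abs (u - w)]
  rw [div_add_div _ _ (ne_of_gt hd) (ne_of_gt (by positivity : (0:ℝ) < 2 * d))]
  rw [div_le_div_iff₀ (by positivity) (by positivity)]
  nlinarith [mul_le_mul_of_nonneg_left (show w ^ 2 ≤ 2 * u ^ 2 + 2 by nlinarith)
    (sq_nonneg d)]

lemma int_gauss (d : ℝ) (hd : 0 < d) : Integrable (fun u : ℝ => Real.exp (-(u ^ 2) / d)) := by
  have : (fun u : ℝ => Real.exp (-(u ^ 2) / d)) = fun u : ℝ => Real.exp (-(d⁻¹) * u ^ 2) := by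
    funext u; congr 1; field_simp
  rw [this]
  exact integrable_exp_neg_mul_sq (by positivity)

lemma Kf'_integrable (t : ℝ) (ht : 0 < t) (a : ℝ) : Integrable (fun u => Kf' t a u) := by
  apply Integrable.mono' (((int_gauss (8 * t) (by positivity)).const_mul
    (Real.sqrt (4 * t) / (2 * t) * (4 * π * t)⁻¹)))
  · exact ((Kf'_continuous t ht).comp (by fun_prop : Continuous fun u : ℝ =>
      ((a, u) : ℝ × ℝ))).aestronglyMeasurable
  · refine Filter.Eventually.of_forall fun u => ?_
    calc ‖Kf' t a u‖ ≤ (Real.sqrt (4 * t) / (2 * t) * (4 * π * t)⁻¹) *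
          (Real.exp (-(a ^ 2) / (4 * t)) * Real.exp (-(u ^ 2) / (8 * t))) := Kf'_abs_le t ht a u
      _ ≤ (Real.sqrt (4 * t) / (2 * t) * (4 * π * t)⁻¹) *
          (1 * Real.exp (-(u ^ 2) / (8 * t))) := by
          apply mul_le_mul_of_nonneg_left _ (by positivity)
          apply mul_le_mul_of_nonneg_right _ (Real.exp_nonneg _)
          rw [Real.exp_le_one_iff]
          exact div_nonpos_of_nonpos_of_nonneg (neg_nonpos.mpr (by positivity)) (by positivity)
      _ = Real.sqrt (4 * t) / (2 * t) * (4 * π * t)⁻¹ * Real.exp (-(u ^ 2) / (8 * t)) := by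
          ring

lemma Kf_tendsto_sub (t : ℝ) (ht : 0 < t) (a c : ℝ) :
    Tendsto (fun r => Kf t a (c - r)) atTop (nhds 0) := by
  have h1 : Tendsto (fun r : ℝ => (c - r) ^ 2) atTop atTop := by
    have : (fun r : ℝ => (c - r) ^ 2) = fun r : ℝ => (r - c) ^ 2 := by
      funext r; ring
    rw [this]
    exact (tendsto_pow_atTop (two_ne_zero)).comp (tendsto_atTop_add_const_right _ (-c)
      (by exact tendsto_id))
  have h2 : Tendsto (fun r : ℝ => -(a ^ 2 + (c - r) ^ 2) / (4 * t)) atTop atBot := by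
    apply Tendsto.atBot_div_const (by positivity)
    exact (tendsto_neg_atBot_iff.mpr (tendsto_atTop_add_const_left _ _ h1))
  have h3 := (Real.tendsto_exp_atBot.comp h2).const_mul ((4 * π * t)⁻¹)
  simpa [Kf, Function.comp] using h3

lemma Kf_tendsto_add (t : ℝ) (ht : 0 < t) (a c : ℝ) :
    Tendsto (fun r => Kf t a (c + r)) atTop (nhds 0) := by
  have h1 : Tendsto (fun r : ℝ => (c + r) ^ 2) atTop atTop := by
    exact (tendsto_pow_atTop (two_ne_zero)).comp (tendsto_atTop_add_const_left _ c tendsto_id)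
  have h2 : Tendsto (fun r : ℝ => -(a ^ 2 + (c + r) ^ 2) / (4 * t)) atTop atBot := by
    apply Tendsto.atBot_div_const (by positivity)
    exact (tendsto_neg_atBot_iff.mpr (tendsto_atTop_add_const_left _ _ h1))
  have h3 := (Real.tendsto_exp_atBot.comp h2).const_mul ((4 * π * t)⁻¹)
  simpa [Kf, Function.comp] using h3

def Dfun (t a x₂ r : ℝ) : ℝ := Kf t a (x₂ - r) - Kf t a (x₂ + r)

lemma Dfun_hasDeriv (t : ℝ) (ht : 0 < t) (a x₂ r : ℝ) :
    HasDerivAt (Dfun t a x₂) (-Kf' t a (x₂ - r) - Kf' t a (x₂ + r)) r :=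
  HasDerivAt.sub (Kf_shift_const_sub t ht a x₂ r) (Kf_shift_const_add t ht a x₂ r)

lemma Dfun_continuous (t : ℝ) (ht : 0 < t) (a x₂ : ℝ) : Continuous (Dfun t a x₂) := by
  unfold Dfun Kf
  fun_prop

lemma Dfun_abs_le (t : ℝ) (ht : 0 < t) (a x₂ r : ℝ) :
    |Dfun t a x₂ r| ≤ Kf t a (x₂ - r) + Kf t a (x₂ + r) := by
  unfold Dfun
  calc |Kf t a (x₂ - r) - Kf t a (x₂ + r)|
      ≤ |Kf t a (x₂ - r)| + |Kf t a (x₂ + r)| := abs_sub _ _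
    _ = Kf t a (x₂ - r) + Kf t a (x₂ + r) := by
      rw [abs_of_nonneg (Kf_nonneg _ _ _ ht), abs_of_nonneg (Kf_nonneg _ _ _ ht)]

lemma Dfun_norm_le (t : ℝ) (ht : 0 < t) (a x₂ r : ℝ) :
    ‖Dfun t a x₂ r‖ ≤ 2 * (4 * π * t)⁻¹ := by
  calc ‖Dfun t a x₂ r‖ ≤ Kf t a (x₂ - r) + Kf t a (x₂ + r) := Dfun_abs_le t ht a x₂ r
    _ ≤ (4 * π * t)⁻¹ + (4 * π * t)⁻¹ := add_le_add (Kf_le _ _ _ ht) (Kf_le _ _ _ ht)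
    _ = 2 * (4 * π * t)⁻¹ := by ring

/-- Slice integration by parts on (0,∞). -/
lemma slice_ibp (t : ℝ) (ht : 0 < t) (x₂ a M : ℝ) (hM : 0 ≤ M) (ψ dψ : ℝ → ℝ)
    (hψc : ContinuousWithinAt ψ (Set.Ici 0) 0)
    (hψd : ∀ r ∈ Set.Ioi (0:ℝ), HasDerivAt ψ (dψ r) r)
    (hψbd : ∀ r, 0 ≤ r → |ψ r| ≤ M)
    (hdψint : IntegrableOn dψ (Set.Ioi (0:ℝ))) :
    ∫ r in Set.Ioi (0:ℝ), (Kf' t a (x₂ - r) + Kf' t a (x₂ + r)) * ψ r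
      = ∫ r in Set.Ioi (0:ℝ), (Kf t a (x₂ - r) - Kf t a (x₂ + r)) * dψ r := by
  have hψcont : ContinuousOn ψ (Set.Ioi 0) := fun r hr =>
    ((hψd r hr).continuousAt).continuousWithinAt
  -- derivative of h := Dfun * ψ on Ioi 0
  have hhd : ∀ r ∈ Set.Ioi (0:ℝ), HasDerivAt (fun r => Dfun t a x₂ r * ψ r)
      ((-Kf' t a (x₂ - r) - Kf' t a (x₂ + r)) * ψ r + Dfun t a x₂ r * dψ r) r := by
    intro r hr
    exact (Dfun_hasDeriv t ht a x₂ r).mul (hψd r hr)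
  -- integrability of the two parts of the derivative
  have hpart1 : IntegrableOn (fun r => (-Kf' t a (x₂ - r) - Kf' t a (x₂ + r)) * ψ r)
      (Set.Ioi (0:ℝ)) := by
    apply Integrable.mono' (g := fun r => (|Kf' t a (x₂ - r)| + |Kf' t a (x₂ + r)|) * M)
    · exact ((((Kf'_integrable t ht a).abs.comp_sub_left x₂).add
        ((Kf'_integrable t ht a).abs.comp_add_left x₂)).mul_const M).integrableOn
    · apply AEStronglyMeasurable.mul
      · apply Continuous.aestronglyMeasurable
        have : Continuous fun r : ℝ => -Kf' t a (x₂ - r) - Kf' t a (x₂ + r) := by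
          unfold Kf' Kf; fun_prop
        exact this
      · exact hψcont.aestronglyMeasurable measurableSet_Ioi
    · filter_upwards [ae_restrict_mem measurableSet_Ioi] with r hr
      have h1 : |ψ r| ≤ M := hψbd r (le_of_lt hr)
      calc ‖(-Kf' t a (x₂ - r) - Kf' t a (x₂ + r)) * ψ r‖
          = |(-Kf' t a (x₂ - r) - Kf' t a (x₂ + r))| * |ψ r| := abs_mul _ _
        _ ≤ (|Kf' t a (x₂ - r)| + |Kf' t a (x₂ + r)|) * M := by
            apply mul_le_mul _ h1 (abs_nonneg _) (by positivity)
            calc |(-Kf' t a (x₂ - r) - Kf' t a (x₂ + r))|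
                ≤ |(-Kf' t a (x₂ - r))| + |Kf' t a (x₂ + r)| := abs_sub _ _
              _ = |Kf' t a (x₂ - r)| + |Kf' t a (x₂ + r)| := by rw [abs_neg]
  have hpart2 : IntegrableOn (fun r => Dfun t a x₂ r * dψ r) (Set.Ioi (0:ℝ)) := by
    apply Integrable.bdd_mul (c := 2 * (4 * π * t)⁻¹) hdψint ((Dfun_continuous t ht a x₂).aestronglyMeasurable.restrict)
    exact Filter.Eventually.of_forall fun r => Dfun_norm_le t ht a x₂ r
  have hint' : IntegrableOn (fun r => (-Kf' t a (x₂ - r) - Kf' t a (x₂ + r)) * ψ r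
      + Dfun t a x₂ r * dψ r) (Set.Ioi (0:ℝ)) := hpart1.add hpart2
  -- continuity at 0 from the right
  have hcont : ContinuousWithinAt (fun r => Dfun t a x₂ r * ψ r) (Set.Ici 0) 0 :=
    ((Dfun_continuous t ht a x₂).continuousAt).continuousWithinAt.mul hψc
  -- tendsto 0 at top
  have htend : Tendsto (fun r => Dfun t a x₂ r * ψ r) atTop (nhds 0) := by
    apply squeeze_zero_norm' (a := fun r => (Kf t a (x₂ - r) + Kf t a (x₂ + r)) * M)
    · filter_upwards [eventually_ge_atTop (0:ℝ)] with r hr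
      calc ‖Dfun t a x₂ r * ψ r‖ = |Dfun t a x₂ r| * |ψ r| := abs_mul _ _
        _ ≤ (Kf t a (x₂ - r) + Kf t a (x₂ + r)) * M :=
          mul_le_mul (Dfun_abs_le t ht a x₂ r) (hψbd r hr) (abs_nonneg _)
            (add_nonneg (Kf_nonneg _ _ _ ht) (Kf_nonneg _ _ _ ht))
    · have := ((Kf_tendsto_sub t ht a x₂).add (Kf_tendsto_add t ht a x₂)).mul_const M
      simpa using this
  have h0 : Dfun t a x₂ 0 * ψ 0 = 0 := by
    simp [Dfun]
  have key := integral_Ioi_of_hasDerivAt_of_tendsto hcont hhd hint' htend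
  rw [h0, sub_zero] at key
  have hsplit := integral_add hpart1 hpart2
  rw [key] at hsplit
  have h2 : ∫ r in Set.Ioi (0:ℝ), (-Kf' t a (x₂ - r) - Kf' t a (x₂ + r)) * ψ r
      = - ∫ r in Set.Ioi (0:ℝ), Dfun t a x₂ r * dψ r := by linarith
  have h3 : ∫ r in Set.Ioi (0:ℝ), (Kf' t a (x₂ - r) + Kf' t a (x₂ + r)) * ψ r
      = - ∫ r in Set.Ioi (0:ℝ), (-Kf' t a (x₂ - r) - Kf' t a (x₂ + r)) * ψ r := by
    rw [← integral_neg]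
    congr 1; funext r; ring
  have h4 : ∫ r in Set.Ioi (0:ℝ), (Kf t a (x₂ - r) - Kf t a (x₂ + r)) * dψ r
      = ∫ r in Set.Ioi (0:ℝ), Dfun t a x₂ r * dψ r := rfl
  rw [h3, h2, neg_neg, h4]

lemma Kf'_bound_shift (t : ℝ) (ht : 0 < t) (a u w : ℝ) (h : |u - w| ≤ 1) :
    |Kf' t a u| ≤ (Real.sqrt (4 * t) / (2 * t) * (4 * π * t)⁻¹ * Real.exp (1 / (8 * t))) *
      (Real.exp (-(a ^ 2) / (4 * t)) * Real.exp (-(w ^ 2) / (16 * t))) := by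
  have hshift : Real.exp (-(u ^ 2) / (8 * t)) ≤
      Real.exp (1 / (8 * t)) * Real.exp (-(w ^ 2) / (16 * t)) := by
    have := gauss_shift (8 * t) u w (by positivity) h
    rwa [show 2 * (8 * t) = 16 * t by ring] at this
  calc |Kf' t a u| ≤ (Real.sqrt (4 * t) / (2 * t) * (4 * π * t)⁻¹) *
        (Real.exp (-(a ^ 2) / (4 * t)) * Real.exp (-(u ^ 2) / (8 * t))) := Kf'_abs_le t ht a u
    _ ≤ (Real.sqrt (4 * t) / (2 * t) * (4 * π * t)⁻¹) *
        (Real.exp (-(a ^ 2) / (4 * t)) *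
          (Real.exp (1 / (8 * t)) * Real.exp (-(w ^ 2) / (16 * t)))) := by
        apply mul_le_mul_of_nonneg_left _ (by positivity)
        exact mul_le_mul_of_nonneg_left hshift (Real.exp_nonneg _)
    _ = (Real.sqrt (4 * t) / (2 * t) * (4 * π * t)⁻¹ * Real.exp (1 / (8 * t))) *
      (Real.exp (-(a ^ 2) / (4 * t)) * Real.exp (-(w ^ 2) / (16 * t))) := by ring

lemma heatK_eq (t a u : ℝ) : heatK (a, u) t = Kf t a u := rfl


/-- e^{tΔ_D}∂₂φ = ∂₂ e^{tΔ_N}φ, i.e. for x ∈ ℝ²₊ the x₂-derivative of the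
Neumann heat extension of φ exists and equals the Dirichlet heat extension of ∂₂φ. -/
theorem dirichlet_neumann_commute (t : ℝ) (ht : 0 < t) (φ : ℝ × ℝ → ℝ)
    (hφ : ContDiffOn ℝ 1 φ {x : ℝ × ℝ | 0 ≤ x.2})
    (hbd : ∃ M, ∀ x : ℝ × ℝ, 0 ≤ x.2 → |φ x| ≤ M)
    (hint : IntegrableOn φ upperHalf)
    (hint2 : IntegrableOn (fun y => fderiv ℝ φ y (0, 1)) upperHalf) :
    ∀ x ∈ upperHalf,
      HasDerivAt
        (fun s => ∫ y in upperHalf,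
          (heatK (x.1 - y.1, s - y.2) t + heatK (x.1 - y.1, s + y.2) t) * φ y)
        (∫ y in upperHalf,
          (heatK (x.1 - y.1, x.2 - y.2) t - heatK (x.1 - y.1, x.2 + y.2) t)
            * fderiv ℝ φ y (0, 1))
        x.2 := by
  intro x hx
  obtain ⟨x₁, x₂⟩ := x
  simp only [upperHalf, Set.mem_setOf_eq] at hx
  simp only [heatK_eq]
  obtain ⟨M, hM⟩ := hbd
  have hM0 : 0 ≤ M := le_trans (abs_nonneg _) (hM (0, 0) le_rfl)
  have hπ : (0:ℝ) < π := Real.pi_pos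
  have hUHmeas : MeasurableSet upperHalf :=
    measurableSet_lt measurable_const measurable_snd
  -- continuity of the kernels
  have hkc : ∀ s : ℝ, Continuous fun y : ℝ × ℝ =>
      Kf t (x₁ - y.1) (s - y.2) + Kf t (x₁ - y.1) (s + y.2) := by
    intro s; unfold Kf; fun_prop
  have hk'c : ∀ s : ℝ, Continuous fun y : ℝ × ℝ =>
      Kf' t (x₁ - y.1) (s - y.2) + Kf' t (x₁ - y.1) (s + y.2) := by
    intro s; unfold Kf' Kf; fun_prop
  -- Step A : differentiation under the integral sign
  have hF_meas : ∀ᶠ s in nhds x₂, AEStronglyMeasurable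
      (fun y : ℝ × ℝ => (Kf t (x₁ - y.1) (s - y.2) + Kf t (x₁ - y.1) (s + y.2)) * φ y)
      (volume.restrict upperHalf) :=
    Filter.Eventually.of_forall fun s =>
      ((hkc s).aestronglyMeasurable.restrict).mul hint.aestronglyMeasurable
  have hF_int : Integrable
      (fun y : ℝ × ℝ => (Kf t (x₁ - y.1) (x₂ - y.2) + Kf t (x₁ - y.1) (x₂ + y.2)) * φ y)
      (volume.restrict upperHalf) := by
    apply Integrable.bdd_mul (c := 2 * (4 * π * t)⁻¹) hint ((hkc x₂).aestronglyMeasurable.restrict)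
    refine Filter.Eventually.of_forall fun y => ?_
    have h1 : (0:ℝ) ≤ Kf t (x₁ - y.1) (x₂ - y.2) := Kf_nonneg _ _ _ ht
    have h2 : (0:ℝ) ≤ Kf t (x₁ - y.1) (x₂ + y.2) := Kf_nonneg _ _ _ ht
    have h3 := Kf_le t (x₁ - y.1) (x₂ - y.2) ht
    have h4 := Kf_le t (x₁ - y.1) (x₂ + y.2) ht
    rw [Real.norm_eq_abs, abs_of_nonneg (by linarith)]
    linarith
  have hF'_meas : AEStronglyMeasurable
      (fun y : ℝ × ℝ => (Kf' t (x₁ - y.1) (x₂ - y.2) + Kf' t (x₁ - y.1) (x₂ + y.2)) * φ y)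
      (volume.restrict upperHalf) :=
    ((hk'c x₂).aestronglyMeasurable.restrict).mul hint.aestronglyMeasurable
  have h_bound : ∀ᵐ y ∂(volume.restrict upperHalf), ∀ s ∈ Metric.ball x₂ 1,
      ‖(Kf' t (x₁ - y.1) (s - y.2) + Kf' t (x₁ - y.1) (s + y.2)) * φ y‖ ≤
      M * ((Real.sqrt (4 * t) / (2 * t) * (4 * π * t)⁻¹ * Real.exp (1 / (8 * t))) *
          (Real.exp (-((x₁ - y.1) ^ 2) / (4 * t)) * Real.exp (-((x₂ - y.2) ^ 2) / (16 * t)))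
        + (Real.sqrt (4 * t) / (2 * t) * (4 * π * t)⁻¹ * Real.exp (1 / (8 * t))) *
          (Real.exp (-((x₁ - y.1) ^ 2) / (4 * t)) * Real.exp (-((x₂ + y.2) ^ 2) / (16 * t)))) := by
    filter_upwards [ae_restrict_mem hUHmeas] with y hy s hs
    have hy2 : (0:ℝ) < y.2 := hy
    have hφy : |φ y| ≤ M := hM y hy2.le
    have hd : |s - x₂| ≤ 1 := by
      have := Metric.mem_ball.mp hs
      rw [Real.dist_eq] at this
      linarith [le_of_lt this]
    have hb1 := Kf'_bound_shift t ht (x₁ - y.1) (s - y.2) (x₂ - y.2)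
      (by rw [show s - y.2 - (x₂ - y.2) = s - x₂ by ring]; exact hd)
    have hb2 := Kf'_bound_shift t ht (x₁ - y.1) (s + y.2) (x₂ + y.2)
      (by rw [show s + y.2 - (x₂ + y.2) = s - x₂ by ring]; exact hd)
    calc ‖(Kf' t (x₁ - y.1) (s - y.2) + Kf' t (x₁ - y.1) (s + y.2)) * φ y‖
        = |Kf' t (x₁ - y.1) (s - y.2) + Kf' t (x₁ - y.1) (s + y.2)| * |φ y| := abs_mul _ _
      _ ≤ (|Kf' t (x₁ - y.1) (s - y.2)| + |Kf' t (x₁ - y.1) (s + y.2)|) * M :=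
          mul_le_mul (abs_add_le _ _) hφy (abs_nonneg _) (by positivity)
      _ ≤ ((Real.sqrt (4 * t) / (2 * t) * (4 * π * t)⁻¹ * Real.exp (1 / (8 * t))) *
            (Real.exp (-((x₁ - y.1) ^ 2) / (4 * t)) * Real.exp (-((x₂ - y.2) ^ 2) / (16 * t)))
          + (Real.sqrt (4 * t) / (2 * t) * (4 * π * t)⁻¹ * Real.exp (1 / (8 * t))) *
            (Real.exp (-((x₁ - y.1) ^ 2) / (4 * t)) *
              Real.exp (-((x₂ + y.2) ^ 2) / (16 * t)))) * M :=
          mul_le_mul_of_nonneg_right (add_le_add hb1 hb2) hM0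
      _ = M * _ := by ring
  have bound_int : Integrable
      (fun y : ℝ × ℝ =>
        M * ((Real.sqrt (4 * t) / (2 * t) * (4 * π * t)⁻¹ * Real.exp (1 / (8 * t))) *
          (Real.exp (-((x₁ - y.1) ^ 2) / (4 * t)) * Real.exp (-((x₂ - y.2) ^ 2) / (16 * t)))
        + (Real.sqrt (4 * t) / (2 * t) * (4 * π * t)⁻¹ * Real.exp (1 / (8 * t))) *
          (Real.exp (-((x₁ - y.1) ^ 2) / (4 * t)) * Real.exp (-((x₂ + y.2) ^ 2) / (16 * t)))))
      (volume.restrict upperHalf) := by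
    apply Integrable.integrableOn
    have hf : Integrable (fun u : ℝ => Real.exp (-((x₁ - u) ^ 2) / (4 * t))) :=
      (int_gauss (4 * t) (by positivity)).comp_sub_left x₁
    have hg1 : Integrable (fun v : ℝ => Real.exp (-((x₂ - v) ^ 2) / (16 * t))) :=
      (int_gauss (16 * t) (by positivity)).comp_sub_left x₂
    have hg2 : Integrable (fun v : ℝ => Real.exp (-((x₂ + v) ^ 2) / (16 * t))) :=
      (int_gauss (16 * t) (by positivity)).comp_add_left x₂
    have h1 : Integrable (fun y : ℝ × ℝ =>
        Real.exp (-((x₁ - y.1) ^ 2) / (4 * t)) * Real.exp (-((x₂ - y.2) ^ 2) / (16 * t))) := by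
      rw [Measure.volume_eq_prod]; exact hf.mul_prod hg1
    have h2 : Integrable (fun y : ℝ × ℝ =>
        Real.exp (-((x₁ - y.1) ^ 2) / (4 * t)) * Real.exp (-((x₂ + y.2) ^ 2) / (16 * t))) := by
      rw [Measure.volume_eq_prod]; exact hf.mul_prod hg2
    exact ((h1.const_mul _).add (h2.const_mul _)).const_mul M
  have h_diff : ∀ᵐ y ∂(volume.restrict upperHalf), ∀ s ∈ Metric.ball x₂ 1,
      HasDerivAt
        (fun s => (Kf t (x₁ - y.1) (s - y.2) + Kf t (x₁ - y.1) (s + y.2)) * φ y)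
        ((Kf' t (x₁ - y.1) (s - y.2) + Kf' t (x₁ - y.1) (s + y.2)) * φ y) s :=
    Filter.Eventually.of_forall fun y s _ =>
      ((Kf_shift_sub t ht (x₁ - y.1) y.2 s).add (Kf_shift_add t ht (x₁ - y.1) y.2 s)).mul_const
        (φ y)
  obtain ⟨hF'int, hderiv⟩ := hasDerivAt_integral_of_dominated_loc_of_deriv_le
    (F := fun s (y : ℝ × ℝ) => (Kf t (x₁ - y.1) (s - y.2) + Kf t (x₁ - y.1) (s + y.2)) * φ y)
    (F' := fun s (y : ℝ × ℝ) => (Kf' t (x₁ - y.1) (s - y.2) + Kf' t (x₁ - y.1) (s + y.2)) * φ y)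
    (Metric.ball_mem_nhds x₂ one_pos) hF_meas hF_int hF'_meas h_bound bound_int h_diff
  -- Step B : integration by parts slice by slice
  have hUHprod : upperHalf = (Set.univ : Set ℝ) ×ˢ Set.Ioi (0:ℝ) := by
    ext y; simp [upperHalf, Set.mem_prod]
  have hres : (volume : Measure (ℝ × ℝ)).restrict upperHalf =
      (volume : Measure ℝ).prod ((volume : Measure ℝ).restrict (Set.Ioi 0)) := by
    rw [hUHprod, Measure.volume_eq_prod ℝ ℝ, ← Measure.prod_restrict, Measure.restrict_univ]
  have hI2 : Integrable
      (fun y : ℝ × ℝ => (Kf t (x₁ - y.1) (x₂ - y.2) - Kf t (x₁ - y.1) (x₂ + y.2)) *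
        fderiv ℝ φ y (0, 1)) (volume.restrict upperHalf) := by
    apply Integrable.bdd_mul (c := 2 * (4 * π * t)⁻¹) hint2
    · apply Continuous.aestronglyMeasurable ?_ |>.restrict
      unfold Kf; fun_prop
    · exact Filter.Eventually.of_forall fun y => Dfun_norm_le t ht (x₁ - y.1) x₂ y.2
  have hI1' : Integrable
      (fun y : ℝ × ℝ => (Kf' t (x₁ - y.1) (x₂ - y.2) + Kf' t (x₁ - y.1) (x₂ + y.2)) * φ y)
      ((volume : Measure ℝ).prod ((volume : Measure ℝ).restrict (Set.Ioi 0))) :=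
    hres ▸ hF'int
  have hI2' : Integrable
      (fun y : ℝ × ℝ => (Kf t (x₁ - y.1) (x₂ - y.2) - Kf t (x₁ - y.1) (x₂ + y.2)) *
        fderiv ℝ φ y (0, 1))
      ((volume : Measure ℝ).prod ((volume : Measure ℝ).restrict (Set.Ioi 0))) :=
    hres ▸ hI2
  have hintd' : Integrable (fun y : ℝ × ℝ => fderiv ℝ φ y (0, 1))
      ((volume : Measure ℝ).prod ((volume : Measure ℝ).restrict (Set.Ioi 0))) :=
    hres ▸ hint2
  have hkey : ∫ y in upperHalf,
      (Kf' t (x₁ - y.1) (x₂ - y.2) + Kf' t (x₁ - y.1) (x₂ + y.2)) * φ y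
      = ∫ y in upperHalf,
      (Kf t (x₁ - y.1) (x₂ - y.2) - Kf t (x₁ - y.1) (x₂ + y.2)) * fderiv ℝ φ y (0, 1) := by
    rw [show (volume : Measure (ℝ × ℝ)).restrict upperHalf =
      (volume : Measure ℝ).prod ((volume : Measure ℝ).restrict (Set.Ioi 0)) from hres]
    rw [integral_prod _ hI1', integral_prod _ hI2']
    apply integral_congr_ae
    filter_upwards [hintd'.prod_right_ae] with y₁ hslice
    have hψc : ContinuousWithinAt (fun r => φ (y₁, r)) (Set.Ici 0) 0 := by
      have hgc : Continuous fun r : ℝ => ((y₁, r) : ℝ × ℝ) := by fun_prop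
      exact (hφ.continuousOn (y₁, 0) (by simp)).comp hgc.continuousWithinAt
        (fun r hr => by simpa using hr)
    have hψd : ∀ r ∈ Set.Ioi (0:ℝ),
        HasDerivAt (fun r => φ (y₁, r)) (fderiv ℝ φ (y₁, r) (0, 1)) r := by
      intro r hr
      have hopen : IsOpen {x : ℝ × ℝ | 0 < x.2} := isOpen_lt continuous_const continuous_snd
      have hmem : {x : ℝ × ℝ | 0 ≤ x.2} ∈ nhds ((y₁, r) : ℝ × ℝ) :=
        Filter.mem_of_superset (hopen.mem_nhds (by exact hr)) (fun z hz => by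
          simp only [Set.mem_setOf_eq] at hz ⊢; exact le_of_lt hz)
      have hdiff : DifferentiableAt ℝ φ (y₁, r) :=
        ((hφ.differentiableOn one_ne_zero) (y₁, r) (show (0:ℝ) ≤ r from le_of_lt hr)).differentiableAt hmem
      have hline : HasDerivAt (fun r : ℝ => ((y₁, r) : ℝ × ℝ)) ((0 : ℝ), (1 : ℝ)) r :=
        (hasDerivAt_const r y₁).prodMk (hasDerivAt_id r)
      have := hdiff.hasFDerivAt.comp_hasDerivAt r hline
      exact this
    have hψbd : ∀ r, 0 ≤ r → |φ (y₁, r)| ≤ M := fun r hr => hM (y₁, r) hr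
    exact slice_ibp t ht x₂ (x₁ - y₁) M hM0 (fun r => φ (y₁, r))
      (fun r => fderiv ℝ φ (y₁, r) (0, 1)) hψc hψd hψbd hslice
  rw [hkey] at hderiv
  exact hderiv

end
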